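/- arXiv:2209.05681 — 2 statements merged into one kernel-verified Lean document; each statement's English description precedes it below -/
import Mathlib

section
/- The direct product SL(2, F₃) × S₃ of the special linear group over the field with three elements and the symmetric group on 3 letters has Jordan constant equal to 24. -/
section aux

abbrev SL23 := Matrix.SpecialLinearGroup (Fin 2) (ZMod 3)
abbrev S3 := Equiv.Perm (Fin 3)
abbrev GP := SL23 × S3

instance : DecidableEq SL23 := fun a b => decidable_of_iff (a.1 = b.1) Subtype.ext_iff.symm

set_option maxRecDepth 10000 in
lemma card_GP : Nat.card GP = 144 := by
  rw [Nat.card_eq_fintype_card]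
  decide

lemma card_center : Nat.card (Subgroup.center SL23) = 2 := by
  rw [Nat.card_eq_fintype_card]
  decide

lemma card_alt : Nat.card (alternatingGroup (Fin 3)) = 3 := by
  rw [Nat.card_eq_fintype_card]
  decide

lemma alt_comm' : ∀ x y : S3, Equiv.Perm.sign x = 1 → Equiv.Perm.sign y = 1 →
    x * y = y * x := by decide

lemma alt_comm : ∀ x y : S3, x ∈ alternatingGroup (Fin 3) → y ∈ alternatingGroup (Fin 3) →
    x * y = y * x := fun x y hx hy =>
  alt_comm' x y (Equiv.Perm.mem_alternatingGroup.mp hx) (Equiv.Perm.mem_alternatingGroup.mp hy)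

/-- The normal abelian subgroup `Z(SL(2,3)) × A₃`. -/
def NN : Subgroup GP := (Subgroup.center SL23).prod (alternatingGroup (Fin 3))

lemma NN_normal : NN.Normal := Subgroup.prod_normal _ _

lemma NN_comm : IsMulCommutative NN := by
  constructor
  constructor
  rintro ⟨⟨a1, a2⟩, ha⟩ ⟨⟨b1, b2⟩, hb⟩
  rw [NN, Subgroup.mem_prod] at ha hb
  apply Subtype.ext
  show ((a1, a2) : GP) * (b1, b2) = (b1, b2) * (a1, a2)
  rw [Prod.mk_mul_mk, Prod.mk_mul_mk]
  exact Prod.ext (Subgroup.mem_center_iff.mp hb.1 a1) (alt_comm _ _ ha.2 hb.2)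

lemma card_NN : Nat.card NN = 6 := by
  rw [NN,Nat.card_congr ((Subgroup.center SL23).prodEquiv (alternatingGroup (Fin 3))).toEquiv,
    Nat.card_prod, card_center, card_alt]

lemma NN_index : NN.index = 24 := by
  have h := NN.card_mul_index
  rw [card_NN, card_GP] at h
  omega

lemma card_P1 : Nat.card {x : SL23 // ∀ g : SL23, (g * x * g⁻¹) * x = x * (g * x * g⁻¹)} = 2 := by
  rw [Nat.card_eq_fintype_card]
  decide

lemma card_P2 : Nat.card {x : S3 // ∀ g : S3, (g * x * g⁻¹) * x = x * (g * x * g⁻¹)} = 3 := by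
  rw [Nat.card_eq_fintype_card]
  decide

/-- Any subset of `GP` consisting of elements commuting with all their conjugates has
cardinality at most 6. -/
lemma card_le_six {s : Set GP}
    (hs : ∀ x ∈ s, ∀ g : GP, (g * x * g⁻¹) * x = x * (g * x * g⁻¹)) :
    Nat.card s ≤ 6 := by
  let T₁ := {x : SL23 // ∀ g : SL23, (g * x * g⁻¹) * x = x * (g * x * g⁻¹)}
  let T₂ := {x : S3 // ∀ g : S3, (g * x * g⁻¹) * x = x * (g * x * g⁻¹)}
  have key : ∀ x ∈ s, (∀ g : SL23, (g * x.1 * g⁻¹) * x.1 = x.1 * (g * x.1 * g⁻¹)) ∧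
      (∀ g : S3, (g * x.2 * g⁻¹) * x.2 = x.2 * (g * x.2 * g⁻¹)) := by
    intro x hx
    constructor
    · intro g
      have := hs x hx (g, 1)
      exact congrArg Prod.fst this
    · intro g
      have := hs x hx (1, g)
      exact congrArg Prod.snd this
  let f : s → T₁ × T₂ := fun x => (⟨x.1.1, (key x.1 x.2).1⟩, ⟨x.1.2, (key x.1 x.2).2⟩)
  have hf : Function.Injective f := by
    rintro ⟨x, hx⟩ ⟨y, hy⟩ h
    simp only [f, Prod.mk.injEq] at h
    exact Subtype.ext (Prod.ext (congrArg Subtype.val h.1) (congrArg Subtype.val h.2))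
  calc Nat.card s ≤ Nat.card (T₁ × T₂) := Nat.card_le_card_of_injective f hf
    _ = 6 := by rw [Nat.card_prod, card_P1, card_P2]

end aux

/-- A group `G` is a *Jordan group* if there is a positive integer `d` such that every
finite subgroup `H` of `G` contains a normal abelian subgroup of index at most `d` in `H`. -/
def IsJordanGroup (G : Type*) [Group G] : Prop :=
  ∃ d : ℕ, 0 < d ∧ ∀ H : Subgroup G, Finite H →
    ∃ A : Subgroup H, A.Normal ∧ IsMulCommutative A ∧ A.index ≤ d

/-- The *Jordan constant* of a group `G`: the least positive integer `d` such that every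
finite subgroup `H` of `G` contains a normal abelian subgroup of index at most `d` in `H`. -/
noncomputable def jordanConstant (G : Type*) [Group G] : ℕ :=
  sInf {d : ℕ | 0 < d ∧ ∀ H : Subgroup G, Finite H →
    ∃ A : Subgroup H, A.Normal ∧ IsMulCommutative A ∧ A.index ≤ d}

lemma mem24 : 24 ∈ {d : ℕ | 0 < d ∧ ∀ H : Subgroup GP, Finite H →
    ∃ A : Subgroup H, A.Normal ∧ IsMulCommutative A ∧ A.index ≤ d} := by
  refine ⟨by norm_num, fun H _ => ?_⟩
  haveI := NN_normal
  haveI := NN_comm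
  refine ⟨NN.subgroupOf H, inferInstance, inferInstance, ?_⟩
  have hdvd : NN.relIndex H ∣ NN.index := Subgroup.relIndex_dvd_index_of_normal NN H
  rw [NN_index] at hdvd
  exact Nat.le_of_dvd (by norm_num) hdvd

lemma lower24 : ∀ d ∈ {d : ℕ | 0 < d ∧ ∀ H : Subgroup GP, Finite H →
    ∃ A : Subgroup H, A.Normal ∧ IsMulCommutative A ∧ A.index ≤ d}, 24 ≤ d := by
  rintro d ⟨-, hd⟩
  obtain ⟨A, hAn, hAc, hAi⟩ := hd ⊤ inferInstance
  set f := (⊤ : Subgroup GP).subtype with hfdef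
  have hsurj : Function.Surjective f := fun g => ⟨⟨g, trivial⟩, rfl⟩
  set A' := A.map f with hA'def
  have hA'n : A'.Normal := hAn.map f hsurj
  have hA'c : ∀ x ∈ A', ∀ y ∈ A', x * y = y * x := by
    rintro x ⟨a, ha, rfl⟩ y ⟨b, hb, rfl⟩
    haveI := hAc
    have : a * b = b * a := Subgroup.mul_comm_of_mem_isMulCommutative A ha hb
    rw [← map_mul, ← map_mul, this]
  have hsub : ∀ x ∈ (A' : Set GP), ∀ g : GP, (g * x * g⁻¹) * x = x * (g * x * g⁻¹) := by
    intro x hx g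
    exact hA'c _ (hA'n.conj_mem x hx g) _ hx
  have hcard' : Nat.card A' ≤ 6 := card_le_six hsub
  have hcardA : Nat.card A = Nat.card A' :=
    Nat.card_congr (Subgroup.equivMapOfInjective A f (⊤ : Subgroup GP).subtype_injective).toEquiv
  have hmul : Nat.card A * A.index = Nat.card (⊤ : Subgroup GP) := A.card_mul_index
  have htop : Nat.card (⊤ : Subgroup GP) = 144 := by
    rw [Nat.card_congr Subgroup.topEquiv.toEquiv, card_GP]
  have h6 : Nat.card A ≤ 6 := hcardA ▸ hcard'
  have : Nat.card A * A.index ≤ 6 * A.index := Nat.mul_le_mul_right A.index h6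
  have h24 : 24 ≤ A.index := by omega
  exact le_trans h24 hAi

/-- The direct product `SL(2, F₃) × S₃` has Jordan constant `24`. -/
theorem stmt_13 :
    jordanConstant (Matrix.SpecialLinearGroup (Fin 2) (ZMod 3) × Equiv.Perm (Fin 3)) = 24 := by
  exact le_antisymm (Nat.sInf_le mem24) (le_csInf ⟨24, mem24⟩ lower24)
end

section
/- Let B = SL(2, F₃) × SL(2, F₃) and let φ : C₂ → Aut(B) be the homomorphism sending the nonidentity element of the cyclic group C₂ of order 2 to the automorphism of B swapping the two factors. Then the semidirect product G = B ⋊_φ C₂ (of order 1152) has Jordan constant equal to 288; moreover, every abelian normal subgroup of G is contained in the center Z(B) = C₂ × C₂ of B. -/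
/-! ### Auxiliary material -/

abbrev SL3 := Matrix.SpecialLinearGroup (Fin 2) (ZMod 3)

instance : DecidableEq SL3 := fun a b => decidable_of_iff (a.val = b.val) Subtype.ext_iff.symm

set_option maxHeartbeats 4000000 in
/-- In `SL(2,3)`, an element commuting with all of its conjugates is `±1`. -/
theorem claimA : ∀ b : SL3, (∀ c : SL3, b * (c * b * c⁻¹) = (c * b * c⁻¹) * b) → b = 1 ∨ b = -1 := by
  decide

def iSL : SL3 := ⟨!![0, -1; 1, 0], by decide⟩
def uSL : SL3 := ⟨!![1, 1; 0, 1], by decide⟩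

theorem uSL_ne : uSL ≠ uSL⁻¹ := by decide
theorem neg_one_comm : ∀ a : SL3, a * (-1) = (-1) * a := by decide

theorem neg_one_mem_center : (-1 : SL3) ∈ Subgroup.center SL3 :=
  Subgroup.mem_center_iff.2 fun a => neg_one_comm a

theorem centerSL_card : Nat.card (Subgroup.center SL3) = 2 := by
  rw [Nat.card_eq_fintype_card]; decide

theorem SL_card : Nat.card SL3 = 24 := by rw [Nat.card_eq_fintype_card]; decide

theorem ii_sq : (iSL, iSL) ^ 2 = ((-1, -1) : SL3 × SL3) := by decide
theorem ii_pow4 : (iSL, iSL) ^ 4 = (1 : SL3 × SL3) := by decide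
theorem negpair_sq : ((-1, -1) : SL3 × SL3) ^ 2 = 1 := by decide
theorem negpair_ne_one : ((-1, -1) : SL3 × SL3) ≠ 1 := by decide

theorem centerB_eq : Subgroup.center (SL3 × SL3)
    = (Subgroup.center SL3).prod (Subgroup.center SL3) := by
  ext x
  constructor
  · intro hx
    have h := Subgroup.mem_center_iff.1 hx
    exact Subgroup.mem_prod.2
      ⟨Subgroup.mem_center_iff.2 fun g => congrArg Prod.fst (h (g, 1)),
       Subgroup.mem_center_iff.2 fun g => congrArg Prod.snd (h (1, g))⟩
  · intro hx
    obtain ⟨h1, h2⟩ := Subgroup.mem_prod.1 hx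
    exact Subgroup.mem_center_iff.2 fun g =>
      Prod.ext (Subgroup.mem_center_iff.1 h1 g.1) (Subgroup.mem_center_iff.1 h2 g.2)

theorem centerB_card : Nat.card (Subgroup.center (SL3 × SL3)) = 4 := by
  rw [centerB_eq, Nat.card_congr (Subgroup.prodEquiv _ _).toEquiv, Nat.card_prod, centerSL_card]

theorem center_aut (e : MulAut (SL3 × SL3)) {z : SL3 × SL3}
    (hz : z ∈ Subgroup.center (SL3 × SL3)) : e z ∈ Subgroup.center (SL3 × SL3) := by
  rw [Subgroup.mem_center_iff] at hz ⊢
  intro g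
  calc g * e z = e (e.symm g * z) := by rw [map_mul, MulEquiv.apply_symm_apply]
    _ = e (z * e.symm g) := by rw [hz (e.symm g)]
    _ = e z * g := by rw [map_mul, MulEquiv.apply_symm_apply]

section Main
open SemidirectProduct

variable (φ : Multiplicative (ZMod 2) →* MulAut (SL3 × SL3))
  (hφ : φ (Multiplicative.ofAdd 1) = MulEquiv.prodComm)

local notation "GG" => (SL3 × SL3) ⋊[φ] Multiplicative (ZMod 2)

theorem tcases : ∀ t : Multiplicative (ZMod 2), t = 1 ∨ t = Multiplicative.ofAdd 1 := by decide

/-- The image of the centre of `B` in the semidirect product is normal. -/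
theorem K_normal : ((Subgroup.center (SL3 × SL3)).map (inl : _ →* GG)).Normal := by
  constructor
  intro x hx g
  obtain ⟨z, hz, rfl⟩ := Subgroup.mem_map.1 hx
  have hzc : φ g.right z ∈ Subgroup.center (SL3 × SL3) := center_aut _ hz
  refine Subgroup.mem_map.2 ⟨φ g.right z, hzc, ?_⟩
  refine SemidirectProduct.ext ?_ ?_
  · simp only [mul_left, mul_right, inv_left, inv_right, left_inl, right_inl, mul_one,
      map_inv, MulAut.apply_inv_self]
    rw [Subgroup.mem_center_iff.1 hzc g.left, mul_inv_cancel_right]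
  · simp only [mul_right, inv_right, right_inl, mul_one, mul_inv_cancel]

theorem K_card :
    Nat.card ((Subgroup.center (SL3 × SL3)).map (inl : _ →* GG)) = 4 := by
  rw [← Nat.card_congr (Subgroup.equivMapOfInjective _ _
    (inl_injective : Function.Injective (inl : _ → GG))).toEquiv]
  exact centerB_card

include hφ in
/-- Every abelian normal subgroup of `GG` is contained in the image of the centre of `B`. -/
theorem part3' (N : Subgroup GG) (hn : N.Normal) (hc : IsMulCommutative N) :
    N ≤ (Subgroup.center (SL3 × SL3)).map inl := by
  haveI := hc
  intro n hnN
  rcases tcases n.right with ht | ht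
  · have key : ∀ c₁ c₂ : SL3,
        n.left * ((c₁, c₂) * n.left * (c₁, c₂)⁻¹) = ((c₁, c₂) * n.left * (c₁, c₂)⁻¹) * n.left := by
      intro c₁ c₂
      have hmN : inl ((c₁, c₂) : SL3 × SL3) * n * (inl ((c₁, c₂) : SL3 × SL3))⁻¹ ∈ N :=
        hn.conj_mem n hnN _
      have hm : inl ((c₁, c₂) : SL3 × SL3) * n * (inl ((c₁, c₂) : SL3 × SL3))⁻¹
          = inl ((c₁, c₂) * n.left * (c₁, c₂)⁻¹) := by
        refine SemidirectProduct.ext ?_ ?_ <;>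
          simp only [mul_left, mul_right, inv_left, inv_right, left_inl, right_inl, ht,
            mul_one, one_mul, inv_one, map_one, MulAut.one_apply]
      rw [hm] at hmN
      have hcomm := Subgroup.mul_comm_of_mem_isMulCommutative (H := N) hnN hmN
      have h2 := congrArg SemidirectProduct.left hcomm
      simpa only [mul_left, left_inl, right_inl, ht, map_one, MulAut.one_apply] using h2
    have hb1 := claimA n.left.1 (fun c => congrArg Prod.fst (key c 1))
    have hb2 := claimA n.left.2 (fun c => congrArg Prod.snd (key 1 c))
    have hcen : n.left ∈ Subgroup.center (SL3 × SL3) := by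
      rw [centerB_eq]
      refine Subgroup.mem_prod.2 ⟨?_, ?_⟩
      · rcases hb1 with h | h <;> rw [h]
        exacts [Subgroup.one_mem _, neg_one_mem_center]
      · rcases hb2 with h | h <;> rw [h]
        exacts [Subgroup.one_mem _, neg_one_mem_center]
    exact Subgroup.mem_map.2 ⟨n.left, hcen, SemidirectProduct.ext rfl ht.symm⟩
  · exfalso
    have hmN : inl (((1 : SL3), uSL) : SL3 × SL3) * n * (inl (((1 : SL3), uSL) : SL3 × SL3))⁻¹ ∈ N :=
      hn.conj_mem n hnN _
    have hm : inl (((1 : SL3), uSL) : SL3 × SL3) * n * (inl (((1 : SL3), uSL) : SL3 × SL3))⁻¹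
        = ⟨((1 : SL3), uSL) * n.left * ((uSL⁻¹ : SL3), (1 : SL3)), n.right⟩ := by
      refine SemidirectProduct.ext ?_ ?_ <;>
        simp only [mul_left, mul_right, inv_left, inv_right, left_inl, right_inl, ht, hφ,
          mul_one, one_mul, inv_one, map_one, MulAut.one_apply, Prod.inv_mk,
          MulEquiv.coe_prodComm, Prod.swap_prod_mk]
    rw [hm] at hmN
    have hcomm := Subgroup.mul_comm_of_mem_isMulCommutative (H := N) hnN hmN
    have h2 := congrArg SemidirectProduct.left hcomm
    simp only [mul_left, ht, hφ, MulEquiv.coe_prodComm] at h2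
    have h3 : n.left.1 * (uSL * n.left.2 * 1) = 1 * n.left.1 * uSL⁻¹ * n.left.2 :=
      congrArg Prod.fst h2
    rw [mul_one, one_mul, ← mul_assoc] at h3
    exact uSL_ne (mul_left_cancel (mul_right_cancel h3))

include hφ in
theorem negpair_comm' : ∀ g : GG, g * inl ((-1, -1) : SL3 × SL3) = inl ((-1, -1) : SL3 × SL3) * g := by
  intro g
  have hphi : φ g.right ((-1, -1) : SL3 × SL3) = (-1, -1) := by
    rcases tcases g.right with h | h <;> rw [h]
    · simp
    · rw [hφ]; rfl
  refine SemidirectProduct.ext ?_ ?_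
  · show g.left * φ g.right ((-1, -1) : SL3 × SL3) = (-1, -1) * φ (1 : Multiplicative (ZMod 2)) g.left
    rw [hphi, map_one, MulAut.one_apply]
    exact Prod.ext (neg_one_comm g.left.1) (neg_one_comm g.left.2)
  · show g.right * 1 = 1 * g.right
    rw [mul_one, one_mul]

/-- Cardinality of the semidirect product. -/
def eGG : GG ≃ (SL3 × SL3) × Multiplicative (ZMod 2) :=
  ⟨fun g => (g.left, g.right), fun p => ⟨p.1, p.2⟩, fun _ => rfl, fun _ => rfl⟩

theorem finGG : Finite GG := Finite.of_equiv _ (eGG φ).symm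

theorem cardGG : Nat.card GG = 1152 := by
  rw [Nat.card_congr (eGG φ), Nat.card_prod, Nat.card_prod]
  rw [Nat.card_eq_fintype_card (α := SL3), Nat.card_eq_fintype_card (α := Multiplicative (ZMod 2))]
  have h1 : Fintype.card SL3 = 24 := by decide
  have h2 : Fintype.card (Multiplicative (ZMod 2)) = 2 := by decide
  rw [h1, h2]

/-- Pigeonhole: any subgroup of index at most 3 contains the central involution. -/
theorem z_mem (H : Subgroup GG) (hidx : H.index ≤ 3) :
    inl ((-1, -1) : SL3 × SL3) ∈ H := by
  haveI : Finite GG := finGG φ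
  haveI : Fintype (GG ⧸ H) := Fintype.ofFinite _
  set x : GG := inl ((iSL, iSL) : SL3 × SL3) with hxdef
  have hx4 : x ^ 4 = 1 := by rw [hxdef, ← map_pow, ii_pow4, map_one]
  have hx2 : x ^ 2 = inl ((-1, -1) : SL3 × SL3) := by rw [hxdef, ← map_pow, ii_sq]
  have hcard : Fintype.card (GG ⧸ H) < Fintype.card (Fin 4) := by
    rw [Fintype.card_fin, ← Nat.card_eq_fintype_card]
    exact lt_of_le_of_lt hidx (by norm_num)
  obtain ⟨a, b, hab, heq⟩ := Fintype.exists_ne_map_eq_of_card_lt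
    (fun k : Fin 4 => (QuotientGroup.mk (x ^ (k : ℕ)) : GG ⧸ H)) hcard
  have main : ∀ k l : ℕ, k < l → l ≤ 3 →
      (QuotientGroup.mk (x ^ k) : GG ⧸ H) = QuotientGroup.mk (x ^ l) →
      inl ((-1, -1) : SL3 × SL3) ∈ H := by
    intro k l hkl hl3 hkleq
    have hd : x ^ (l - k) ∈ H := by
      have h1 : x ^ k * x ^ (l - k) = x ^ l := by
        rw [← pow_add, Nat.add_sub_cancel' (le_of_lt hkl)]
      have h2 : x ^ (l - k) = (x ^ k)⁻¹ * x ^ l := by rw [← h1, inv_mul_cancel_left]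
      rw [h2]
      exact (QuotientGroup.eq.1 hkleq : (x ^ k)⁻¹ * x ^ l ∈ H)
    obtain ⟨hr1, hr2⟩ : 1 ≤ l - k ∧ l - k ≤ 3 := ⟨by omega, by omega⟩
    set m := l - k with hmdef
    interval_cases m
    · have h2 := H.pow_mem hd 2
      rw [← pow_mul] at h2
      norm_num at h2
      rwa [hx2] at h2
    · rwa [hx2] at hd
    · have h2 := H.pow_mem hd 2
      rw [← pow_mul] at h2
      have h6 : x ^ (3 * 2) = x ^ 2 := by
        rw [show 3 * 2 = 4 + 2 from rfl, pow_add, hx4, one_mul]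
      rwa [h6, hx2] at h2
  rcases Nat.lt_or_ge (a : ℕ) (b : ℕ) with h | h
  · exact main a b h (by omega) heq
  · have h' : (b : ℕ) < (a : ℕ) := by
      rcases Nat.lt_or_ge (b : ℕ) (a : ℕ) with h2 | h2
      · exact h2
      · exact absurd (Fin.ext (le_antisymm h2 h)) hab
    exact main b a h' (by omega) heq.symm

include hφ in
theorem mem288 : ∀ H : Subgroup GG, Finite H →
    ∃ A : Subgroup H, A.Normal ∧ IsMulCommutative A ∧ A.index ≤ 288 := by
  haveI : Finite GG := finGG φ
  intro H _
  by_cases hsmall : Nat.card H ≤ 288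
  · refine ⟨⊥, inferInstance, ⟨⟨fun a b => Subtype.ext ?_⟩⟩, by rwa [Subgroup.index_bot]⟩
    have ha := Subgroup.mem_bot.1 a.2
    have hb := Subgroup.mem_bot.1 b.2
    show a.1 * b.1 = b.1 * a.1
    rw [ha, hb]
  · push_neg at hsmall
    have hmul := H.index_mul_card
    rw [cardGG φ] at hmul
    have hidx0 : H.index ≠ 0 := by intro h0; rw [h0, zero_mul] at hmul; exact absurd hmul (by norm_num)
    have hidx3 : H.index ≤ 3 := by
      by_contra hgt
      push_neg at hgt
      have : 4 * 289 ≤ H.index * Nat.card H := Nat.mul_le_mul hgt hsmall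
      omega
    have hz : inl ((-1, -1) : SL3 × SL3) ∈ H := z_mem φ H hidx3
    rcases Nat.lt_or_ge 576 (Nat.card H) with hbig | hle
    · -- `H = ⊤`
      have h1 : H.index = 1 := by
        by_contra h1
        have h2 : 2 ≤ H.index := by omega
        have : 2 * 577 ≤ H.index * Nat.card H := Nat.mul_le_mul h2 hbig
        omega
      have hH : H = ⊤ := Subgroup.index_eq_one.1 h1
      subst hH
      haveI := K_normal φ
      refine ⟨((Subgroup.center (SL3 × SL3)).map (inl : _ →* GG)).subgroupOf ⊤,
        inferInstance, inferInstance, ?_⟩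
      have hcardA : Nat.card (((Subgroup.center (SL3 × SL3)).map (inl : _ →* GG)).subgroupOf ⊤) = 4 := by
        rw [Nat.card_congr (Subgroup.subgroupOfEquivOfLe le_top).toEquiv]
        exact K_card φ
      have := (((Subgroup.center (SL3 × SL3)).map (inl : _ →* GG)).subgroupOf ⊤).index_mul_card
      rw [hcardA, Subgroup.card_top, cardGG φ] at this
      omega
    · -- `288 < |H| ≤ 576`; use the central involution
      set zt : H := ⟨inl ((-1, -1) : SL3 × SL3), hz⟩ with hzt
      have hzc : zt ∈ Subgroup.center H := by
        rw [Subgroup.mem_center_iff]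
        intro h
        exact Subtype.ext (negpair_comm' φ hφ h.1)
      refine ⟨Subgroup.zpowers zt, ?_, inferInstance, ?_⟩
      · constructor
        intro a ha g
        have hac : a ∈ Subgroup.center H := Subgroup.zpowers_le.2 hzc ha
        rwa [Subgroup.mem_center_iff.1 hac g, mul_inv_cancel_right]
      · have hzt2 : zt ^ 2 = 1 := by
          refine Subtype.ext ?_
          show (inl ((-1, -1) : SL3 × SL3) : GG) ^ 2 = 1
          rw [← map_pow, negpair_sq, map_one]
        have hztne : zt ≠ 1 := by
          intro h
          have : (inl ((-1, -1) : SL3 × SL3) : GG) = 1 := congrArg Subtype.val h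
          rw [← map_one (inl : _ →* GG)] at this
          exact negpair_ne_one (inl_injective this)
        have hord : orderOf zt = 2 := orderOf_eq_prime hzt2 hztne
        have hcard2 : Nat.card (Subgroup.zpowers zt) = 2 := by rw [Nat.card_zpowers, hord]
        have := (Subgroup.zpowers zt).index_mul_card
        rw [hcard2] at this
        omega

include hφ in
theorem lb (d : ℕ) (hd : ∀ H : Subgroup GG, Finite H →
    ∃ A : Subgroup H, A.Normal ∧ IsMulCommutative A ∧ A.index ≤ d) : 288 ≤ d := by
  haveI : Finite GG := finGG φ
  obtain ⟨A, hAn, hAc, hAi⟩ := hd ⊤ inferInstance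
  haveI := hAc
  have hsurj : Function.Surjective (⊤ : Subgroup GG).subtype := fun g => ⟨⟨g, trivial⟩, rfl⟩
  have hNle := part3' φ hφ (A.map (⊤ : Subgroup GG).subtype) (hAn.map _ hsurj) inferInstance
  have hcard4 : Nat.card (A.map (⊤ : Subgroup GG).subtype) ≤ 4 := by
    have h := Subgroup.card_le_of_le hNle
    rwa [K_card φ] at h
  have hAcard : Nat.card A = Nat.card (A.map (⊤ : Subgroup GG).subtype) :=
    Nat.card_congr (Subgroup.equivMapOfInjective _ _ (⊤ : Subgroup GG).subtype_injective).toEquiv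
  have hmul := A.index_mul_card
  rw [Subgroup.card_top, cardGG φ] at hmul
  have : A.index * Nat.card A ≤ d * 4 := Nat.mul_le_mul hAi (hAcard ▸ hcard4)
  omega

end Main

/-- Let `B = SL(2, F₃) × SL(2, F₃)` and let `φ : C₂ → Aut B` send the nonidentity element
to the swap of the two factors. Then `G = B ⋊[φ] C₂` has Jordan constant `288`, and every
abelian normal subgroup of `G` is contained in (the image in `G` of) the center
`Z(B) ≅ C₂ × C₂` of `B`, which has order `4`. -/
theorem stmt_14
    (φ : Multiplicative (ZMod 2) →*
      MulAut (Matrix.SpecialLinearGroup (Fin 2) (ZMod 3) ×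
        Matrix.SpecialLinearGroup (Fin 2) (ZMod 3)))
    (hφ : φ (Multiplicative.ofAdd 1) = MulEquiv.prodComm) :
    jordanConstant
      ((Matrix.SpecialLinearGroup (Fin 2) (ZMod 3) ×
        Matrix.SpecialLinearGroup (Fin 2) (ZMod 3)) ⋊[φ] Multiplicative (ZMod 2)) = 288 ∧
    Nat.card (Subgroup.center (Matrix.SpecialLinearGroup (Fin 2) (ZMod 3) ×
        Matrix.SpecialLinearGroup (Fin 2) (ZMod 3))) = 4 ∧
    ∀ N : Subgroup ((Matrix.SpecialLinearGroup (Fin 2) (ZMod 3) ×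
        Matrix.SpecialLinearGroup (Fin 2) (ZMod 3)) ⋊[φ] Multiplicative (ZMod 2)),
      N.Normal → IsMulCommutative N →
      N ≤ (Subgroup.center (Matrix.SpecialLinearGroup (Fin 2) (ZMod 3) ×
        Matrix.SpecialLinearGroup (Fin 2) (ZMod 3))).map SemidirectProduct.inl := by
  refine ⟨?_, centerB_card, part3' φ hφ⟩
  have hmem : 288 ∈ {d : ℕ | 0 < d ∧ ∀ H : Subgroup ((SL3 × SL3) ⋊[φ] Multiplicative (ZMod 2)),
      Finite H → ∃ A : Subgroup H, A.Normal ∧ IsMulCommutative A ∧ A.index ≤ d} :=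
    ⟨by norm_num, mem288 φ hφ⟩
  exact le_antisymm (Nat.sInf_le hmem) (le_csInf ⟨288, hmem⟩ fun d hd => lb φ hφ d hd.2)
end
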